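/- Let σ₁, σ₀ > 0 and set γ* = σ₁/(σ₁ + σ₀). For any μ₁, μ₀ ∈ ℝ, μ₁·γ*/σ₁ − μ₀·(1−γ*)/σ₀ = (μ₁ − μ₀)/(σ₁ + σ₀). Consequently, for every c ∈ ℝ, the worst-case regret R^max(γ*, c) := sup_{(μ₁,μ₀)} R(γ*, c, μ₁, μ₀) equals max{ sup_{δ>0} δ·Φ(c − δ/(σ₁+σ₀)), sup_{δ>0} δ·Φ(−c − δ/(σ₁+σ₀)) }, where R(γ, c, μ₁, μ₀) := (μ₁−μ₀)·Φ(c − {μ₁γ/σ₁ − μ₀(1−γ)/σ₀}) if μ₁ ≥ μ₀ and (μ₀−μ₁)·Φ(−c + {μ₁γ/σ₁ − μ₀(1−γ)/σ₀}) if μ₀ > μ₁. -/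

import Mathlib

/-- The standard normal cumulative distribution function
`Φ(x) = ∫_{−∞}^{x} (2π)^{−1/2} e^{−t²/2} dt`. -/
noncomputable def stdNormalCDF (x : ℝ) : ℝ :=
  ∫ t in Set.Iic x, (Real.sqrt (2 * Real.pi))⁻¹ * Real.exp (-(t ^ 2) / 2)

/-- Expected regret `R(γ, c, μ₁, μ₀)` of the constant sampling rule `γ` with threshold
implementation rule `1{x₁(1)/σ₁ − x₀(1)/σ₀ ≥ c}` in the reduced static two-arm problem. -/
noncomputable def regret (σ₁ σ₀ γ c μ₁ μ₀ : ℝ) : ℝ :=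
  if μ₀ ≤ μ₁ then
    (μ₁ - μ₀) * stdNormalCDF (c - (μ₁ * γ / σ₁ - μ₀ * (1 - γ) / σ₀))
  else
    (μ₀ - μ₁) * stdNormalCDF (-c + (μ₁ * γ / σ₁ - μ₀ * (1 - γ) / σ₀))

open MeasureTheory Real

noncomputable def Cconst : ℝ :=
  ∫ t : ℝ, (Real.sqrt (2 * Real.pi))⁻¹ * Real.exp (-t - t ^ 2 / 2)

lemma Cconst_nonneg : 0 ≤ Cconst :=
  integral_nonneg fun t => by positivity

lemma gauss_integrable : Integrable (fun t : ℝ => (Real.sqrt (2 * Real.pi))⁻¹ * Real.exp (-(t ^ 2) / 2)) := by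
  have h1 : Integrable (fun t : ℝ => Real.exp (-(1/2 : ℝ) * t ^ 2)) :=
    integrable_exp_neg_mul_sq (by norm_num)
  have h2 := h1.const_mul ((Real.sqrt (2 * Real.pi))⁻¹)
  convert h2 using 2 with t
  congr 1
  ring

lemma tilted_integrable :
    Integrable (fun t : ℝ => (Real.sqrt (2 * Real.pi))⁻¹ * Real.exp (-t - t ^ 2 / 2)) := by
  have h1 : Integrable (fun t : ℝ => Real.exp (-(1/2 : ℝ) * t ^ 2)) :=
    integrable_exp_neg_mul_sq (by norm_num)
  have h2 := h1.comp_add_right 1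
  have h3 := (h2.const_mul (Real.exp (1/2))).const_mul ((Real.sqrt (2 * Real.pi))⁻¹)
  convert h3 using 2 with t
  rw [← Real.exp_add]
  congr 1
  ring

lemma stdNormalCDF_nonneg (x : ℝ) : 0 ≤ stdNormalCDF x :=
  setIntegral_nonneg measurableSet_Iic fun t _ => by positivity

lemma stdNormalCDF_le (x : ℝ) : stdNormalCDF x ≤ Real.exp x * Cconst := by
  have key : stdNormalCDF x ≤
      ∫ t in Set.Iic x, Real.exp x * ((Real.sqrt (2 * Real.pi))⁻¹ * Real.exp (-t - t ^ 2 / 2)) := by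
    apply setIntegral_mono_on gauss_integrable.integrableOn
      ((tilted_integrable.const_mul (Real.exp x)).integrableOn) measurableSet_Iic
    intro t ht
    simp only [Set.mem_Iic] at ht
    have h1 : Real.exp (-(t ^ 2) / 2) ≤ Real.exp x * Real.exp (-t - t ^ 2 / 2) := by
      rw [← Real.exp_add]
      apply Real.exp_le_exp.2
      nlinarith
    calc (Real.sqrt (2 * Real.pi))⁻¹ * Real.exp (-(t ^ 2) / 2)
        ≤ (Real.sqrt (2 * Real.pi))⁻¹ * (Real.exp x * Real.exp (-t - t ^ 2 / 2)) := by
          apply mul_le_mul_of_nonneg_left h1 (by positivity)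
      _ = Real.exp x * ((Real.sqrt (2 * Real.pi))⁻¹ * Real.exp (-t - t ^ 2 / 2)) := by ring
  have key2 : (∫ t in Set.Iic x, Real.exp x * ((Real.sqrt (2 * Real.pi))⁻¹ * Real.exp (-t - t ^ 2 / 2)))
      ≤ ∫ t : ℝ, Real.exp x * ((Real.sqrt (2 * Real.pi))⁻¹ * Real.exp (-t - t ^ 2 / 2)) := by
    apply setIntegral_le_integral (tilted_integrable.const_mul (Real.exp x))
    filter_upwards with t
    positivity
  have key3 : (∫ t : ℝ, Real.exp x * ((Real.sqrt (2 * Real.pi))⁻¹ * Real.exp (-t - t ^ 2 / 2)))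
      = Real.exp x * Cconst := integral_const_mul _ _
  linarith

lemma linear_bound {s δ a : ℝ} (hs : 0 < s) (hδ : 0 < δ) :
    δ * stdNormalCDF (a - δ / s) ≤ Real.exp a * Cconst * s := by
  have h1 : stdNormalCDF (a - δ / s) ≤ Real.exp (a - δ / s) * Cconst := stdNormalCDF_le _
  have h2 : Real.exp (a - δ / s) = Real.exp a * Real.exp (-(δ / s)) := by
    rw [← Real.exp_add]; ring_nf
  have h3 : δ * Real.exp (-(δ / s)) ≤ s := by
    have h4 : δ / s ≤ Real.exp (δ / s) := by
      have := Real.add_one_le_exp (δ / s)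
      linarith
    have h5 : δ ≤ s * Real.exp (δ / s) := by
      have := (div_le_iff₀ hs).1 h4
      linarith [mul_comm s (Real.exp (δ / s))]
    rw [Real.exp_neg]
    calc δ * (Real.exp (δ / s))⁻¹ ≤ s * Real.exp (δ / s) * (Real.exp (δ / s))⁻¹ := by
          apply mul_le_mul_of_nonneg_right h5 (by positivity)
      _ = s := by field_simp
  calc δ * stdNormalCDF (a - δ / s) ≤ δ * (Real.exp (a - δ / s) * Cconst) := by
        apply mul_le_mul_of_nonneg_left h1 hδ.le
    _ = Real.exp a * Cconst * (δ * Real.exp (-(δ / s))) := by rw [h2]; ring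
    _ ≤ Real.exp a * Cconst * s :=
        mul_le_mul_of_nonneg_left h3 (mul_nonneg (Real.exp_pos a).le Cconst_nonneg)

/-- With the Neyman allocation `γ* = σ₁/(σ₁+σ₀)`, the drift simplifies to
`(μ₁ − μ₀)/(σ₁ + σ₀)`, and for every `c` the worst-case regret equals
`max{ sup_{δ>0} δΦ(c − δ/(σ₁+σ₀)), sup_{δ>0} δΦ(−c − δ/(σ₁+σ₀)) }`. -/
theorem neyman_worst_case_regret (σ₁ σ₀ : ℝ) (hσ₁ : 0 < σ₁) (hσ₀ : 0 < σ₀) :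
    (∀ μ₁ μ₀ : ℝ,
      μ₁ * (σ₁ / (σ₁ + σ₀)) / σ₁ - μ₀ * (1 - σ₁ / (σ₁ + σ₀)) / σ₀ =
        (μ₁ - μ₀) / (σ₁ + σ₀)) ∧
    ∀ c : ℝ,
      sSup {r : ℝ | ∃ μ₁ μ₀ : ℝ, r = regret σ₁ σ₀ (σ₁ / (σ₁ + σ₀)) c μ₁ μ₀} =
      max (sSup ((fun δ : ℝ => δ * stdNormalCDF (c - δ / (σ₁ + σ₀))) '' Set.Ioi 0))
          (sSup ((fun δ : ℝ => δ * stdNormalCDF (-c - δ / (σ₁ + σ₀))) '' Set.Ioi 0)) := by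
  have hs : (0:ℝ) < σ₁ + σ₀ := by linarith
  have hdrift : ∀ μ₁ μ₀ : ℝ,
      μ₁ * (σ₁ / (σ₁ + σ₀)) / σ₁ - μ₀ * (1 - σ₁ / (σ₁ + σ₀)) / σ₀ =
        (μ₁ - μ₀) / (σ₁ + σ₀) := by
    intro μ₁ μ₀
    field_simp
    ring
  refine ⟨hdrift, fun c => ?_⟩
  set s := σ₁ + σ₀ with hs_def
  set f : ℝ → ℝ := fun δ => δ * stdNormalCDF (c - δ / s) with hf
  set g : ℝ → ℝ := fun δ => δ * stdNormalCDF (-c - δ / s) with hg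
  set A := f '' Set.Ioi 0 with hA
  set B := g '' Set.Ioi 0 with hB
  -- the regret set equals insert 0 (A ∪ B)
  have hset : {r : ℝ | ∃ μ₁ μ₀ : ℝ, r = regret σ₁ σ₀ (σ₁ / (σ₁ + σ₀)) c μ₁ μ₀}
      = insert 0 (A ∪ B) := by
    ext r
    simp only [Set.mem_setOf_eq, Set.mem_insert_iff, Set.mem_union, hA, hB,
      Set.mem_image, Set.mem_Ioi]
    constructor
    · rintro ⟨μ₁, μ₀, rfl⟩
      unfold regret
      rw [hdrift μ₁ μ₀]
      rcases le_or_gt μ₀ μ₁ with h | h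
      · rcases eq_or_lt_of_le h with heq | hlt
        · left; simp [if_pos h, heq]
        · right; left
          exact ⟨μ₁ - μ₀, by linarith, by simp [if_pos h, hf]⟩
      · right; right
        refine ⟨μ₀ - μ₁, by linarith, ?_⟩
        rw [if_neg (not_le.2 h)]
        simp only [hg]
        congr 1
        ring_nf
    · rintro (rfl | ⟨δ, hδ, rfl⟩ | ⟨δ, hδ, rfl⟩)
      · exact ⟨0, 0, by simp [regret]⟩
      · refine ⟨δ, 0, ?_⟩
        unfold regret
        rw [hdrift δ 0, if_pos (by linarith : (0:ℝ) ≤ δ)]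
        simp [hf]
      · refine ⟨0, δ, ?_⟩
        unfold regret
        rw [hdrift 0 δ, if_neg (by simpa using hδ.not_ge : ¬ δ ≤ (0:ℝ))]
        simp only [hg, sub_zero, zero_sub]
        congr 1
        ring_nf
  have hbddA : BddAbove A := by
    refine ⟨Real.exp c * Cconst * s, ?_⟩
    rintro r ⟨δ, hδ, rfl⟩
    exact linear_bound hs hδ
  have hbddB : BddAbove B := by
    refine ⟨Real.exp (-c) * Cconst * s, ?_⟩
    rintro r ⟨δ, hδ, rfl⟩
    exact linear_bound hs hδ
  have hneA : A.Nonempty := ⟨f 1, ⟨1, by norm_num, rfl⟩⟩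
  have hneB : B.Nonempty := ⟨g 1, ⟨1, by norm_num, rfl⟩⟩
  have hunion : sSup (A ∪ B) = max (sSup A) (sSup B) :=
    csSup_union hbddA hneA hbddB hneB
  have hApos : 0 ≤ sSup A := by
    have : f 1 ≤ sSup A := le_csSup hbddA ⟨1, by norm_num, rfl⟩
    have hfpos : 0 ≤ f 1 := by
      simp only [hf, one_mul]
      exact stdNormalCDF_nonneg _
    linarith
  rw [hset, csSup_insert (hbddA.union hbddB) (hneA.mono Set.subset_union_left),
    hunion]
  rw [max_eq_right]
  exact le_trans hApos (le_max_left _ _)
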